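/- arXiv:math/0611037 — 3 statements merged into one kernel-verified Lean document; each statement's English description precedes it below -/
import Mathlib

section
/- Let G be a finite group, p a prime, and U a normal p-subgroup of G. If x, y ∈ G are p-regular elements with xU = yU in G/U, then x and y are conjugate in G. -/
/-- Cocycle-style conjugacy lemma: if `Z` is an "abelian" normal subgroup,
`x⁻¹ * y ∈ Z`, `x ^ n = y ^ n = 1` with `n` coprime to the orders of all
elements of `Z`, then `x` and `y` are conjugate. -/
lemma conj_of_abelian_aux {G : Type*} [Group G] (Z : Subgroup G) [Z.Normal]
    (hcomm : ∀ a ∈ Z, ∀ b ∈ Z, a * b = b * a)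
    (x y : G) (n : ℕ) (hxn : x ^ n = 1) (hyn : y ^ n = 1)
    (huZ : x⁻¹ * y ∈ Z) (hcop : ∀ z ∈ Z, Nat.Coprime n (orderOf z)) :
    IsConj x y := by
  set u : G := x⁻¹ * y with hu
  have hyxu : y = x * u := by rw [hu]; group
  -- the cocycle
  set f : ℕ → G := fun i => (x ^ i)⁻¹ * y ^ i with hf
  have hf0 : f 0 = 1 := by simp [hf]
  have hfsucc : ∀ i, f (i + 1) = (x⁻¹ * f i * x) * u := by
    intro i
    simp only [hf, hu, pow_succ, pow_succ']
    group
  have hfZ : ∀ i, f i ∈ Z := by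
    intro i
    induction i with
    | zero => simpa [hf0] using Z.one_mem
    | succ k ih =>
      rw [hfsucc]
      exact Z.mul_mem (by simpa using Subgroup.Normal.conj_mem ‹Z.Normal› _ ih x⁻¹) huZ
  -- the partial products
  set b : ℕ → G := fun k => Nat.rec 1 (fun k bk => bk * f k) k with hb
  have hb0 : b 0 = 1 := rfl
  have hbsucc : ∀ k, b (k + 1) = b k * f k := fun k => rfl
  have hbZ : ∀ k, b k ∈ Z := by
    intro k
    induction k with
    | zero => simpa [hb0] using Z.one_mem
    | succ k ih => rw [hbsucc]; exact Z.mul_mem ih (hfZ k)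
  have huZ' : ∀ k : ℕ, u ^ k ∈ Z := fun k => Z.pow_mem huZ k
  -- key invariant
  have key : ∀ k, x⁻¹ * b k * x * u ^ k = b k * f k := by
    intro k
    induction k with
    | zero => simp [hb0, hf0]
    | succ k ih =>
      have hc : f (k + 1) * u ^ k = u ^ k * f (k + 1) :=
        hcomm _ (hfZ _) _ (huZ' k)
      calc x⁻¹ * b (k + 1) * x * u ^ (k + 1)
          = (x⁻¹ * b k * x) * ((x⁻¹ * f k * x) * u) * u ^ k := by
            rw [hbsucc, pow_succ']; group
        _ = (x⁻¹ * b k * x) * (f (k + 1) * u ^ k) := by rw [← hfsucc]; group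
        _ = (x⁻¹ * b k * x) * (u ^ k * f (k + 1)) := by rw [hc]
        _ = (x⁻¹ * b k * x * u ^ k) * f (k + 1) := by group
        _ = b k * f k * f (k + 1) := by rw [ih]
        _ = b (k + 1) * f (k + 1) := by rw [hbsucc]
  have hfn : f n = 1 := by simp [hf, hxn, hyn]
  set B : G := b n with hB
  have hkey : x⁻¹ * B * x * u ^ n = B := by
    rw [hB, key n, hfn, mul_one]
  have hun : u ^ n = x⁻¹ * B⁻¹ * x * B :=
    calc u ^ n = (x⁻¹ * B * x)⁻¹ * (x⁻¹ * B * x * u ^ n) := by group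
      _ = (x⁻¹ * B * x)⁻¹ * B := by rw [hkey]
      _ = x⁻¹ * B⁻¹ * x * B := by group
  -- find k with n * k ≡ 1 mod orderOf u
  have hcopu : Nat.Coprime n (orderOf u) := hcop u huZ
  rcases (lt_or_ge (orderOf u) 2) with hd | hd
  · -- orderOf u = 0 or 1
    interval_cases h : (orderOf u)
    · -- orderOf u = 0, so n = 1, so x = y = 1
      have hn1 : n = 1 := by simpa [h, Nat.coprime_zero_right] using hcopu
      have hx1 : x = 1 := by simpa [hn1] using hxn
      have hy1 : y = 1 := by simpa [hn1] using hyn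
      rw [hx1, hy1]
    · -- orderOf u = 1, so u = 1, x = y
      have : u = 1 := orderOf_eq_one_iff.mp h
      have hxy : x = y := by
        have := hyxu
        rw [this] at *
        simp [‹u = 1›] at hyxu
        exact hyxu.symm ▸ (by rw [hyxu, ‹u = 1›, mul_one])
      rw [hxy]
  · obtain ⟨k, -, hk⟩ := Nat.exists_mul_mod_eq_one_of_coprime hcopu hd
    have hmod : n * k ≡ 1 [MOD orderOf u] := by
      unfold Nat.ModEq
      rw [hk, Nat.one_mod_eq_one.mpr (by omega)]
    have hupow : u ^ (n * k) = u := by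
      conv_rhs => rw [← pow_one u]
      exact (pow_eq_pow_iff_modEq.mpr hmod)
    -- the conjugating element
    set z : G := B ^ k with hz
    have hBZ : B ∈ Z := hbZ n
    have hcommB : Commute (x⁻¹ * B⁻¹ * x) B :=
      hcomm _ (by simpa using Subgroup.Normal.conj_mem ‹Z.Normal› _ (Z.inv_mem hBZ) x⁻¹) _ hBZ
    have hzxz : z⁻¹ * x * z = y := by
      have hc2 : (x⁻¹ * B⁻¹ * x) ^ k = x⁻¹ * (B⁻¹) ^ k * x := by
        have hxx : x⁻¹ * B⁻¹ * x = x⁻¹ * B⁻¹ * (x⁻¹)⁻¹ := by rw [inv_inv]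
        rw [hxx, conj_pow, inv_inv]
      have h1 : z⁻¹ * x * z = x * ((x⁻¹ * B⁻¹ * x) ^ k * B ^ k) := by
        rw [hz, hc2, ← inv_pow]
        group
      rw [h1, ← hcommB.mul_pow, ← hun, ← pow_mul, hupow, ← hyxu]
    rw [isConj_iff]
    exact ⟨z⁻¹, by rw [inv_inv]; exact hzxz⟩

/-- The main induction: on a bound for the cardinality of `U`. -/
lemma pRegular_aux : ∀ (N : ℕ) {G : Type*} [Group G] [Finite G] (p : ℕ) [Fact p.Prime]
    (U : Subgroup G) [U.Normal] (_ : IsPGroup p U) (_ : Nat.card U ≤ N)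
    (x y : G) (_ : Nat.Coprime (orderOf x) p) (_ : Nat.Coprime (orderOf y) p)
    (_ : (x : G ⧸ U) = (y : G ⧸ U)), IsConj x y := by
  intro N
  induction N with
  | zero =>
    intro G _ _ p _ U _ hU hcard x y hx hy hxy
    exact absurd hcard (by simpa using Nat.card_pos.ne')
  | succ N ih =>
    intro G _ _ p _ U _ hU hcard x y hx hy hxy
    have hmemU : x⁻¹ * y ∈ U := QuotientGroup.eq.mp hxy
    by_cases hbot : U = ⊥
    · have h1 : x⁻¹ * y = 1 := by simpa [hbot] using hmemU
      rw [inv_mul_eq_one.mp h1]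
    · -- U is nontrivial; take Z' = center of U, pushed into G
      have : Nontrivial U := U.nontrivial_iff_ne_bot.mpr hbot
      have hUp : IsPGroup p (↥U) := hU
      have hZnt : Nontrivial (Subgroup.center ↥U) := hUp.center_nontrivial
      set Z' : Subgroup G := (Subgroup.center ↥U).map U.subtype with hZ'
      have hZ'U : Z' ≤ U := by
        rw [hZ']
        rintro _ ⟨⟨a, ha⟩, -, rfl⟩
        exact ha
      have hZ'comm : ∀ a ∈ Z', ∀ b ∈ Z', a * b = b * a := by
        rintro _ ⟨⟨a, haU⟩, ha, rfl⟩ b hb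
        have hbU : b ∈ U := hZ'U hb
        have := (Subgroup.mem_center_iff.mp ha) ⟨b, hbU⟩
        exact congrArg Subtype.val this |>.symm
      haveI hZ'normal : Z'.Normal := by
        constructor
        rintro _ ⟨⟨a, haU⟩, ha, rfl⟩ g
        have hgag : g * a * g⁻¹ ∈ U := ‹U.Normal›.conj_mem a haU g
        refine ⟨⟨g * a * g⁻¹, hgag⟩, Subgroup.mem_center_iff.mpr ?_, rfl⟩
        rintro ⟨w, hw⟩
        have hw' : g⁻¹ * w * g ∈ U := by
          simpa using ‹U.Normal›.conj_mem w hw g⁻¹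
        have := (Subgroup.mem_center_iff.mp ha) ⟨g⁻¹ * w * g, hw'⟩
        have h2 : (g⁻¹ * w * g) * a = a * (g⁻¹ * w * g) := congrArg Subtype.val this
        have : w * (g * a * g⁻¹) = (g * a * g⁻¹) * w := by
          have := congrArg (fun t => g * t * g⁻¹) h2
          simpa [mul_assoc] using this
        exact Subtype.ext (by simpa using this)
      have hZ'nt : Z' ≠ ⊥ := by
        obtain ⟨z, hz⟩ := exists_ne (1 : Subgroup.center ↥U)
        intro hbot'
        apply hz
        have hzZ' : (U.subtype z.1 : G) ∈ Z' := ⟨z.1, z.2, rfl⟩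
        rw [hbot', Subgroup.mem_bot] at hzZ'
        ext
        simpa using hzZ'
      -- quotient by Z'
      let Q := G ⧸ Z'
      let π : G →* Q := QuotientGroup.mk' Z'
      have hπsurj : Function.Surjective π := QuotientGroup.mk'_surjective Z'
      set U' : Subgroup Q := U.map π with hU'
      haveI hU'normal : U'.Normal := Subgroup.Normal.map ‹U.Normal› π hπsurj
      have hU'p : IsPGroup p U' := IsPGroup.map hU π
      -- cardinality decreases strictly
      have hcardlt : Nat.card U' < Nat.card U := by
        have hφs := π.subgroupMap_surjective U
        refine lt_of_le_of_ne (Nat.card_le_card_of_surjective _ hφs) ?_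
        intro heq
        have hbij : Function.Bijective (π.subgroupMap U) :=
          (Nat.bijective_iff_surjective_and_card _).mpr ⟨hφs, heq.symm⟩
        obtain ⟨z, hzZ', hzne⟩ : ∃ z : G, z ∈ Z' ∧ z ≠ 1 := by
          by_contra h
          push_neg at h
          exact hZ'nt ((Subgroup.eq_bot_iff_forall _).mpr h)
        have hzU : z ∈ U := hZ'U hzZ'
        have h1 : π.subgroupMap U ⟨z, hzU⟩ = 1 := by
          ext
          show ((z : G) : G ⧸ Z') = 1
          exact (QuotientGroup.eq_one_iff z).mpr hzZ'
        have h2 : π.subgroupMap U (1 : U) = 1 := map_one _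
        have := hbij.injective (h1.trans h2.symm)
        exact hzne (by simpa using congrArg Subtype.val this)
      -- apply induction hypothesis in Q
      have hx' : Nat.Coprime (orderOf (π x)) p :=
        Nat.Coprime.coprime_dvd_left (orderOf_map_dvd π x) hx
      have hy' : Nat.Coprime (orderOf (π y)) p :=
        Nat.Coprime.coprime_dvd_left (orderOf_map_dvd π y) hy
      have hxy' : ((π x : Q) : Q ⧸ U') = ((π y : Q) : Q ⧸ U') := by
        rw [QuotientGroup.eq]
        exact ⟨x⁻¹ * y, hmemU, by simp [π]⟩
      have hconjQ : IsConj (π x) (π y) :=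
        ih p U' hU'p (by omega) (π x) (π y) hx' hy' hxy'
      obtain ⟨c, hc⟩ := isConj_iff.mp hconjQ
      obtain ⟨g, rfl⟩ := hπsurj c
      -- now x₁ := g x g⁻¹ and y are congruent mod Z'
      set x₁ : G := g * x * g⁻¹ with hx₁
      have hπx₁ : π x₁ = π y := by
        rw [hx₁]
        simpa using hc
      have hmemZ' : x₁⁻¹ * y ∈ Z' := by
        have := QuotientGroup.eq.mp (show ((x₁ : G) : G ⧸ Z') = y from hπx₁)
        exact this
      -- use the abelian lemma with n = orderOf x * orderOf y
      set n : ℕ := orderOf x * orderOf y with hn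
      have hx₁n : x₁ ^ n = 1 := by
        rw [hx₁, conj_pow, hn, pow_mul, pow_orderOf_eq_one, one_pow]
        simp
      have hyn : y ^ n = 1 := by
        rw [hn, mul_comm, pow_mul, pow_orderOf_eq_one, one_pow]
      have hZ'pgroup : IsPGroup p Z' := hU.to_le hZ'U
      obtain ⟨m, hm⟩ := (IsPGroup.iff_card).mp hZ'pgroup
      have hnp : Nat.Coprime n p := Nat.Coprime.mul hx hy
      have hcopZ : ∀ z ∈ Z', Nat.Coprime n (orderOf z) := by
        intro z hz
        have hdvd : orderOf z ∣ Nat.card Z' := Z'.orderOf_dvd_natCard hz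
        rw [hm] at hdvd
        exact Nat.Coprime.coprime_dvd_right hdvd (hnp.pow_right m)
      have habel : IsConj x₁ y :=
        conj_of_abelian_aux Z' hZ'comm x₁ y n hx₁n hyn hmemZ' hcopZ
      exact (isConj_iff.mpr ⟨g, rfl⟩).trans habel

/-- Let `G` be a finite group, `p` a prime, and `U` a normal `p`-subgroup of `G`.
If `x, y ∈ G` are `p`-regular elements with `xU = yU` in `G ⧸ U`, then `x` and `y`
are conjugate in `G`. -/
theorem pRegular_isConj_of_eq_in_quotient
    {G : Type*} [Group G] [Finite G] (p : ℕ) [Fact p.Prime]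
    (U : Subgroup G) [U.Normal] (hU : IsPGroup p U)
    (x y : G) (hx : Nat.Coprime (orderOf x) p) (hy : Nat.Coprime (orderOf y) p)
    (hxy : (x : G ⧸ U) = (y : G ⧸ U)) :
    IsConj x y := by
  exact pRegular_aux (Nat.card U) p U hU le_rfl x y hx hy hxy
end

section
/- Let G be a finite group, p a prime, U a normal p-subgroup of G, and q a power of p. Let x, y ∈ G be p-regular elements. If there exist g ∈ G and j ≥ 0 such that yU = (g⁻¹ x^{q^j} g)U in G/U, then there exist h ∈ G and i ≥ 0 such that y = h⁻¹ x^{q^i} h in G. In other words, if the images of x and y in G/U lie in the same orbit under the combined action of conjugation and raising to q-th powers, then so do x and y in G. -/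
open Subgroup
open scoped IsMulCommutative

section Aux

variable {p : ℕ} [Fact p.Prime]

/-- Abelian case: if `V` is an abelian normal `p`-subgroup and two `p`-regular
elements `y, z` have the same image mod `V`, then they are conjugate. -/
private lemma aux_abelian {G : Type*} [Group G] [Finite G] (V : Subgroup G) [V.Normal]
    [IsMulCommutative V] (hV : IsPGroup p V) (y z : G)
    (hy : Nat.Coprime (orderOf y) p) (hz : Nat.Coprime (orderOf z) p)
    (hmem : z⁻¹ * y ∈ V) : ∃ w : G, y = w⁻¹ * z * w := by
  by_cases htriv : Nat.card ↥V = 1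
  · have hbot : V = ⊥ := Subgroup.eq_bot_of_card_eq V htriv
    rw [hbot, Subgroup.mem_bot] at hmem
    refine ⟨1, ?_⟩
    have : z = y := by
      have := congrArg (z * ·) hmem
      simpa [mul_assoc] using this.symm
    simp [this]
  set m := orderOf y with hm
  have hconjmem : ∀ v ∈ V, z⁻¹ * v * z ∈ V := by
    intro v hv
    simpa using Subgroup.Normal.conj_mem ‹V.Normal› v hv z⁻¹
  let τ : ↥V →* ↥V :=
    { toFun := fun v => ⟨z⁻¹ * ↑v * z, hconjmem ↑v v.2⟩
      map_one' := by ext; simp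
      map_mul' := fun a b => by ext; simp [mul_assoc] }
  have hamem : ∀ k : ℕ, z⁻¹ ^ k * (z⁻¹ * y) * z ^ k ∈ V := by
    intro k
    have := Subgroup.Normal.conj_mem ‹V.Normal› _ hmem (z⁻¹ ^ k)
    simpa [inv_pow] using this
  let a : ℕ → ↥V := fun k => ⟨z⁻¹ ^ k * (z⁻¹ * y) * z ^ k, hamem k⟩
  have hτa : ∀ k, τ (a k) = a (k + 1) := by
    intro k
    ext
    show z⁻¹ * (z⁻¹ ^ k * (z⁻¹ * y) * z ^ k) * z = z⁻¹ ^ (k+1) * (z⁻¹ * y) * z ^ (k+1)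
    rw [pow_succ' z⁻¹, pow_succ z]
    group
  let s : ℕ → ↥V := fun n => ∏ k ∈ Finset.range n, a k
  have hs_succ : ∀ n : ℕ, s (n + 1) = τ (s n) * a 0 := by
    intro n
    show (∏ k ∈ Finset.range (n+1), a k) = τ (s n) * a 0
    rw [Finset.prod_range_succ', map_prod]
    congr 1
    exact Finset.prod_congr rfl fun k _ => (hτa k).symm
  have hcoeτ : ∀ v : ↥V, (↑(τ v) : G) = z⁻¹ * ↑v * z := fun v => rfl
  have hcoea0 : ((a 0 : ↥V) : G) = z⁻¹ * y := by simp [a]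
  have lemA : ∀ n : ℕ, y ^ n = z ^ n * ((s n : ↥V) : G) := by
    intro n
    induction n with
    | zero => simp [s]
    | succ n ih =>
      rw [pow_succ, ih, pow_succ z, hs_succ n]
      push_cast [hcoeτ, hcoea0]
      group
  have hs0 : s 0 = 1 := by simp [s]
  have hzm : z ^ m = 1 := by
    have h1 : y ^ m = 1 := pow_orderOf_eq_one y
    have h2 : z ^ m = ((s m : ↥V) : G)⁻¹ := by
      have h := lemA m
      rw [h1] at h
      exact eq_inv_of_mul_eq_one_left h.symm
    have hmemzm : z ^ m ∈ V := by
      rw [h2]; exact V.inv_mem (s m).2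
    have hdvd1 : orderOf (z ^ m) ∣ orderOf z := orderOf_pow_dvd m
    obtain ⟨k, hk⟩ := hV ⟨z ^ m, hmemzm⟩
    have hdvd2 : orderOf (z ^ m) ∣ p ^ k := by
      have : (z ^ m) ^ p ^ k = 1 := by
        have := congrArg (fun v : ↥V => (v : G)) hk
        simpa using this
      exact orderOf_dvd_of_pow_eq_one this
    have hcop : Nat.Coprime (orderOf (z ^ m)) (p ^ k) :=
      (Nat.Coprime.coprime_dvd_left hdvd1 hz).pow_right k
    have : orderOf (z ^ m) = 1 := Nat.eq_one_of_dvd_coprimes hcop dvd_rfl hdvd2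
    exact orderOf_eq_one_iff.mp this
  have hsm : s m = 1 := by
    have h1 := lemA m
    rw [pow_orderOf_eq_one, hzm, one_mul] at h1
    exact Subtype.ext h1.symm
  -- the element W and its conjugation property
  let W : ↥V := ∏ j ∈ Finset.range m, s j
  have hτs : ∀ j, τ (s j) = s (j + 1) * (a 0)⁻¹ := by
    intro j
    rw [hs_succ j, mul_assoc, mul_inv_cancel, mul_one]
  have hτW : τ W = W * ((a 0) ^ m)⁻¹ := by
    have h1 : τ W = ∏ j ∈ Finset.range m, (s (j + 1) * (a 0)⁻¹) := by
      rw [map_prod]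
      exact Finset.prod_congr rfl fun j _ => hτs j
    rw [h1, Finset.prod_mul_distrib, Finset.prod_const, Finset.card_range]
    have h2 : (∏ j ∈ Finset.range m, s (j + 1)) = W := by
      have h3 : (∏ j ∈ Finset.range (m + 1), s j) = (∏ j ∈ Finset.range m, s (j + 1)) * s 0 :=
        Finset.prod_range_succ' s m
      have h4 : (∏ j ∈ Finset.range (m + 1), s j) = W * s m := Finset.prod_range_succ s m
      rw [hsm, mul_one] at h4
      rw [hs0, mul_one] at h3
      rw [← h3, h4]
    rw [h2, inv_pow]
  -- choose the exponent c
  have hVfin : Finite ↥V := inferInstance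
  obtain ⟨k, hk⟩ := IsPGroup.iff_card.mp hV
  have hcard1 : 1 < Nat.card ↥V := lt_of_le_of_ne (Nat.one_le_iff_ne_zero.mpr Nat.card_pos.ne')
    (Ne.symm htriv)
  have hcopm : Nat.Coprime m (Nat.card ↥V) := by
    rw [hk]; exact hy.pow_right k
  obtain ⟨c, hc⟩ := Nat.exists_mul_mod_eq_one_of_coprime hcopm hcard1
  have ha0pow : (a 0) ^ (m * c) = a 0 := by
    have hdiv : m * c = Nat.card ↥V * (m * c / Nat.card ↥V) + 1 := by
      conv_lhs => rw [← Nat.div_add_mod (m * c) (Nat.card ↥V)]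
      rw [hc.2]
    rw [hdiv, pow_add, pow_mul, pow_card_eq_one', one_pow, one_mul, pow_one]
  have hτWc : τ (W ^ c) = W ^ c * (a 0)⁻¹ := by
    rw [map_pow, hτW, mul_pow, inv_pow, ← pow_mul, ha0pow]
  refine ⟨((W ^ c : ↥V) : G), ?_⟩
  have hkey : z⁻¹ * ((W ^ c : ↥V) : G) * z = ((W ^ c : ↥V) : G) * (z⁻¹ * y)⁻¹ := by
    calc z⁻¹ * ((W ^ c : ↥V) : G) * z = (↑(τ (W ^ c)) : G) := (hcoeτ _).symm
    _ = ((W ^ c : ↥V) : G) * (z⁻¹ * y)⁻¹ := by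
        rw [hτWc]; push_cast; simp [hcoea0]
  set w : G := ((W ^ c : ↥V) : G) with hw
  have h3 : z⁻¹ * w = w * (y⁻¹ * z) * z⁻¹ := by
    have := congrArg (· * z⁻¹) hkey
    simpa [mul_assoc] using this
  have h4 : w * y = z * w := by
    calc w * y = z * (z⁻¹ * w) * y := by group
    _ = z * (w * (y⁻¹ * z) * z⁻¹) * y := by rw [h3]
    _ = z * w := by group
  calc y = w⁻¹ * (w * y) := by group
  _ = w⁻¹ * (z * w) := by rw [h4]
  _ = w⁻¹ * z * w := by group

universe u

/-- Main auxiliary lemma, by induction on the cardinality of the normal `p`-subgroup. -/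
private lemma aux_main (p : ℕ) [Fact p.Prime] :
    ∀ (n : ℕ) {G : Type u} [Group G] [Finite G] (U : Subgroup G) [U.Normal],
      Nat.card ↥U ≤ n → IsPGroup p ↥U →
      ∀ y z : G, Nat.Coprime (orderOf y) p → Nat.Coprime (orderOf z) p →
      (QuotientGroup.mk y : G ⧸ U) = QuotientGroup.mk z →
      ∃ w : G, y = w⁻¹ * z * w := by
  intro n
  induction n with
  | zero =>
    intro G _ _ U _ hcard _ _ _ _ _ _
    exact absurd hcard (by have := Nat.card_pos (α := ↥U); omega)
  | succ n ih =>
    intro G _ _ U _ hcard hU y z hy hz hq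
    have hyz : y⁻¹ * z ∈ U := QuotientGroup.eq.mp hq
    by_cases hbot : Nat.card ↥U = 1
    · have hUbot : U = ⊥ := Subgroup.eq_bot_of_card_eq U hbot
      rw [hUbot, Subgroup.mem_bot] at hyz
      refine ⟨1, ?_⟩
      have : z = y := by
        have := congrArg (y * ·) hyz
        simpa [mul_assoc] using this
      simp [this]
    -- U is nontrivial; pass to the center of U
    have hUnontriv : Nontrivial ↥U := by
      refine Finite.one_lt_card_iff_nontrivial.mp ?_
      have := Nat.card_pos (α := ↥U); omega
    set Z : Subgroup G := Subgroup.centralizer (U : Set G) ⊓ U with hZdef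
    have hZle : Z ≤ U := inf_le_right
    haveI hZn : Z.Normal := by
      constructor
      intro a ha g
      refine ⟨Subgroup.mem_centralizer_iff.mpr ?_, Subgroup.Normal.conj_mem ‹U.Normal› a ha.2 g⟩
      intro u hu
      have hu' : g⁻¹ * u * g ∈ U := by
        simpa using Subgroup.Normal.conj_mem ‹U.Normal› u hu g⁻¹
      have hcomm := Subgroup.mem_centralizer_iff.mp ha.1 (g⁻¹ * u * g) hu'
      calc u * (g * a * g⁻¹) = g * ((g⁻¹ * u * g) * a) * g⁻¹ := by group
      _ = g * (a * (g⁻¹ * u * g)) * g⁻¹ := by rw [hcomm]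
      _ = g * a * g⁻¹ * u := by group
    haveI hZc : IsMulCommutative Z := by
      constructor
      constructor
      intro b a
      have := Subgroup.mem_centralizer_iff.mp b.2.1 ↑a a.2.2
      exact Subtype.ext this.symm
    have hZp : IsPGroup p ↥Z := hU.to_le hZle
    -- a nontrivial element of Z
    haveI : Finite ↥U := inferInstance
    haveI : Nontrivial (Subgroup.center ↥U) := IsPGroup.center_nontrivial hU
    obtain ⟨c₀, hc₀⟩ := exists_ne (1 : Subgroup.center ↥U)
    have hc₀Z : ((c₀ : ↥U) : G) ∈ Z := by
      refine ⟨Subgroup.mem_centralizer_iff.mpr ?_, (c₀ : ↥U).2⟩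
      intro u hu
      have := (Subgroup.mem_center_iff.mp c₀.2) ⟨u, hu⟩
      exact congrArg (fun v : ↥U => (v : G)) this
    -- the quotient group and image subgroup
    let f : ↥U →* G ⧸ Z := (QuotientGroup.mk' Z).comp U.subtype
    set U' : Subgroup (G ⧸ Z) := U.map (QuotientGroup.mk' Z) with hU'def
    haveI hU'n : U'.Normal := Subgroup.Normal.map ‹U.Normal› _ (QuotientGroup.mk'_surjective Z)
    have hU'p : IsPGroup p ↥U' := hU.map (QuotientGroup.mk' Z)
    -- cardinality bound
    have hrange : f.range = U' := by
      rw [hU'def]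
      show ((QuotientGroup.mk' Z).comp U.subtype).range = U.map (QuotientGroup.mk' Z)
      rw [MonoidHom.range_comp, U.range_subtype]
    have hcardeq : Nat.card ↥U = Nat.card ↥U' * Nat.card ↥f.ker := by
      rw [Subgroup.card_eq_card_quotient_mul_card_subgroup f.ker]
      congr 1
      rw [← hrange]
      exact Nat.card_congr (QuotientGroup.quotientKerEquivRange f).toEquiv
    have hkermem : (c₀ : ↥U) ∈ f.ker := by
      rw [MonoidHom.mem_ker]
      show QuotientGroup.mk' Z ((c₀ : ↥U) : G) = 1
      rw [QuotientGroup.mk'_apply]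
      exact (QuotientGroup.eq_one_iff _).mpr hc₀Z
    have hker_nontriv : Nontrivial ↥f.ker := by
      refine ⟨⟨⟨(c₀ : ↥U), hkermem⟩, 1, ?_⟩⟩
      intro hcontra
      apply hc₀
      have h1 : ((c₀ : ↥U) : ↥U) = 1 := by
        simpa using congrArg (fun v : ↥f.ker => (v : ↥U)) hcontra
      exact OneMemClass.coe_eq_one.mp h1
    have hkerlt : 1 < Nat.card ↥f.ker := Finite.one_lt_card_iff_nontrivial.mpr hker_nontriv
    have hU'pos : 1 ≤ Nat.card ↥U' := Nat.card_pos
    have h2A : Nat.card ↥U' * 2 ≤ Nat.card ↥U := by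
      rw [hcardeq]
      exact Nat.mul_le_mul_left _ hkerlt
    have hcard' : Nat.card ↥U' ≤ n := by omega
    -- transfer the hypotheses to the quotient
    have hy' : Nat.Coprime (orderOf (QuotientGroup.mk' Z y)) p :=
      Nat.Coprime.coprime_dvd_left (orderOf_map_dvd (QuotientGroup.mk' Z) y) hy
    have hz' : Nat.Coprime (orderOf (QuotientGroup.mk' Z z)) p :=
      Nat.Coprime.coprime_dvd_left (orderOf_map_dvd (QuotientGroup.mk' Z) z) hz
    have hq' : (QuotientGroup.mk (QuotientGroup.mk' Z y) : (G ⧸ Z) ⧸ U') =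
        QuotientGroup.mk (QuotientGroup.mk' Z z) := by
      rw [QuotientGroup.eq]
      refine Subgroup.mem_map.mpr ⟨y⁻¹ * z, hyz, ?_⟩
      simp
    obtain ⟨w', hw'⟩ := ih U' hcard' hU'p (QuotientGroup.mk' Z y) (QuotientGroup.mk' Z z)
      hy' hz' hq'
    obtain ⟨w, rfl⟩ := QuotientGroup.mk'_surjective Z w'
    have hw2 : QuotientGroup.mk' Z y = QuotientGroup.mk' Z (w⁻¹ * z * w) := by
      rw [hw']; simp
    have hmemZ : (w⁻¹ * z * w)⁻¹ * y ∈ Z := by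
      have : QuotientGroup.mk' Z (w⁻¹ * z * w) = QuotientGroup.mk' Z y := hw2.symm
      simpa [QuotientGroup.mk'_apply] using QuotientGroup.eq.mp this
    have hordconj : orderOf (w⁻¹ * z * w) = orderOf z := by
      have h1 : w⁻¹ * z * w = (MulAut.conj w⁻¹) z := by
        simp [MulAut.conj_apply]
      rw [h1]
      exact MulEquiv.orderOf_eq _ z
    have hzconj : Nat.Coprime (orderOf (w⁻¹ * z * w)) p := by rw [hordconj]; exact hz
    obtain ⟨v, hv⟩ := aux_abelian Z hZp y (w⁻¹ * z * w) hy hzconj hmemZ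
    refine ⟨w * v, ?_⟩
    rw [hv]
    group

end Aux

/-- Let `G` be a finite group, `p` a prime, `U` a normal `p`-subgroup of `G`, and `q` a
power of `p`.  Let `x, y ∈ G` be `p`-regular elements.  If there exist `g ∈ G` and `j ≥ 0`
such that `yU = (g⁻¹ x^(q^j) g)U` in `G ⧸ U`, then there exist `h ∈ G` and `i ≥ 0` such that
`y = h⁻¹ x^(q^i) h` in `G`. -/
theorem pRegular_conj_pow_of_conj_pow_in_quotient
    {G : Type*} [Group G] [Finite G] (p q : ℕ) [Fact p.Prime]
    (hq : ∃ s : ℕ, q = p ^ s)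
    (U : Subgroup G) [U.Normal] (hU : IsPGroup p U)
    (x y : G) (hx : Nat.Coprime (orderOf x) p) (hy : Nat.Coprime (orderOf y) p)
    (hxy : ∃ (g : G) (j : ℕ), (y : G ⧸ U) = ((g⁻¹ * x ^ (q ^ j) * g : G) : G ⧸ U)) :
    ∃ (h : G) (i : ℕ), y = h⁻¹ * x ^ (q ^ i) * h := by
  obtain ⟨g, j, hgj⟩ := hxy
  set z : G := g⁻¹ * x ^ (q ^ j) * g with hzdef
  have hordz : orderOf z = orderOf (x ^ (q ^ j)) := by
    have h1 : z = (MulAut.conj g⁻¹) (x ^ (q ^ j)) := by simp [hzdef, MulAut.conj_apply]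
    rw [h1]
    exact MulEquiv.orderOf_eq _ _
  have hz : Nat.Coprime (orderOf z) p := by
    rw [hordz]
    exact Nat.Coprime.coprime_dvd_left (orderOf_pow_dvd _) hx
  obtain ⟨w, hw⟩ := aux_main p (Nat.card ↥U) U le_rfl hU y z hy hz hgj
  refine ⟨g * w, j, ?_⟩
  rw [hw, hzdef]
  group
end

section
/- Let G be a finite group, p a prime, and U a normal p-subgroup of G. Then the projection G → G/U induces a bijection between the set of conjugacy classes of p-regular elements of G and the set of conjugacy classes of p-regular elements of G/U. -/
open Subgroup Finset
open scoped IsMulCommutative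

private lemma conj_aux_abelian {G : Type*} [Group G] [Finite G] {p : ℕ} [Fact p.Prime]
    (U : Subgroup G) [hN : U.Normal] [IsMulCommutative U] (hU : IsPGroup p U)
    {x u : G} (hu : u ∈ U) (hx : (orderOf x).Coprime p)
    (hxu : (orderOf (x * u)).Coprime p) : IsConj x (x * u) := by
  set m := orderOf x with hm
  have hxm : x ^ m = 1 := pow_orderOf_eq_one x
  -- `(x*u)^m ∈ U`
  have hq : (x * u) ^ m ∈ U := by
    have h1 : (QuotientGroup.mk' U) ((x * u) ^ m) = 1 := by
      rw [map_pow, map_mul, show (QuotientGroup.mk' U) u = 1 from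
        (QuotientGroup.eq_one_iff u).mpr hu, mul_one, ← map_pow, hxm, map_one]
    exact (QuotientGroup.eq_one_iff _).mp h1
  -- `(x*u)^m = 1`
  have hxum : (x * u) ^ m = 1 := by
    obtain ⟨k, hk⟩ := hU ⟨_, hq⟩
    have hk' : ((x * u) ^ m) ^ p ^ k = 1 := by
      have := congrArg (Subgroup.subtype U) hk
      simpa using this
    have hdvd : orderOf (x * u) ∣ m * p ^ k :=
      orderOf_dvd_iff_pow_eq_one.mpr (by rwa [pow_mul])
    exact orderOf_dvd_iff_pow_eq_one.mp
      ((Nat.Coprime.pow_right k hxu).dvd_of_dvd_mul_right hdvd)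
  -- the "cocycle" ψ
  have hψmem : ∀ i : ℕ, (x ^ i)⁻¹ * u * x ^ i ∈ U := fun i => by
    simpa using hN.conj_mem u hu (x ^ i)⁻¹
  set ψ : ℕ → U := fun i => ⟨(x ^ i)⁻¹ * u * x ^ i, hψmem i⟩ with hψ
  have hψ0 : ψ 0 = ⟨u, hu⟩ := by apply Subtype.ext; simp [hψ]
  have hψm : ψ m = ⟨u, hu⟩ := by apply Subtype.ext; simp [hψ, hxm]
  -- conjugation by x as a hom of U
  have hcmem : ∀ v : ↥U, x⁻¹ * (v : G) * x ∈ U := fun v => by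
    simpa using hN.conj_mem v v.2 x⁻¹
  set c : ↥U →* ↥U :=
    { toFun := fun v => ⟨x⁻¹ * v * x, hcmem v⟩
      map_one' := by apply Subtype.ext; simp
      map_mul' := fun a b => by apply Subtype.ext; push_cast; group } with hc
  have hccoe : ∀ v : ↥U, ((c v : ↥U) : G) = x⁻¹ * v * x := fun v => rfl
  have hcψ : ∀ i, c (ψ i) = ψ (i + 1) := by
    intro i
    apply Subtype.ext
    rw [hccoe]
    show x⁻¹ * ((x ^ i)⁻¹ * u * x ^ i) * x = (x ^ (i + 1))⁻¹ * u * x ^ (i + 1)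
    rw [pow_succ]
    group
  -- key power formula
  have hpow : ∀ n : ℕ, (x * u) ^ n = x ^ n * ((∏ i ∈ range n, ψ i : ↥U) : G) := by
    intro n
    induction n with
    | zero => simp
    | succ n ihn =>
      rw [pow_succ' (x * u) n, ihn, prod_range_succ,
        mul_comm (∏ i ∈ range n, ψ i) (ψ n)]
      push_cast
      rw [show ((ψ n : ↥U) : G) = (x ^ n)⁻¹ * u * x ^ n from rfl]
      rw [pow_succ]
      group
  have hN1 : (∏ i ∈ range m, ψ i) = 1 := by
    have h2 := hpow m
    rw [hxum, hxm, one_mul] at h2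
    exact_mod_cast h2.symm
  have hshift : (∏ i ∈ range m, ψ (i + 1)) = 1 := by
    have h1 : (∏ i ∈ range (m + 1), ψ i) = (∏ i ∈ range m, ψ (i + 1)) * ψ 0 :=
      prod_range_succ' ψ m
    have h2 : (∏ i ∈ range (m + 1), ψ i) = (∏ i ∈ range m, ψ i) * ψ m :=
      prod_range_succ ψ m
    rw [hN1, one_mul, hψm, ← hψ0] at h2
    rw [h2] at h1
    exact (mul_right_cancel ((one_mul (ψ 0)).trans h1)).symm
  -- telescoping
  set w1 : ↥U := ∏ i ∈ range m, ψ i ^ i with hw1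
  have hcw1 : c w1 / w1 = (⟨u, hu⟩ : ↥U) ^ m := by
    rw [hw1, map_prod]
    simp only [map_pow, hcψ]
    rw [← prod_div_distrib]
    have hterm : ∀ i ∈ range m, ψ (i + 1) ^ i / ψ i ^ i =
        (ψ (i + 1) ^ (i + 1) / ψ i ^ i) / ψ (i + 1) := by
      intro i _
      rw [pow_succ, div_div, mul_div_mul_right_eq_div]
    rw [prod_congr rfl hterm, prod_div_distrib,
      prod_range_div (fun j => ψ j ^ j) m, hshift, div_one, hψm, hψ0]
    simp
  -- choose the coprime root
  rcases le_or_gt (Nat.card ↥U) 1 with hcard | hcard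
  · -- `U` is trivial, so `u = 1`
    have hsub : Subsingleton ↥U := by
      have h1 : Nat.card ↥U = 1 := le_antisymm hcard Nat.card_pos
      exact (Nat.card_eq_one_iff_unique.mp h1).1
    have hu1 : u = 1 := by
      have : (⟨u, hu⟩ : ↥U) = 1 := Subsingleton.elim _ _
      exact congrArg (fun v : ↥U => (v : G)) this
    rw [hu1, mul_one]
  · obtain ⟨n0, hn0⟩ := IsPGroup.iff_card.mp hU
    have hcop : m.Coprime (Nat.card ↥U) := by
      rw [hn0]; exact Nat.Coprime.pow_right _ hx
    obtain ⟨k, -, hk⟩ := Nat.exists_mul_mod_eq_one_of_coprime hcop hcard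
    set w : ↥U := w1 ^ k with hw
    have hcw : c w / w = ⟨u, hu⟩ := by
      rw [hw, map_pow, ← div_pow, hcw1, ← pow_mul]
      calc (⟨u, hu⟩ : ↥U) ^ (m * k)
          = (⟨u, hu⟩ : ↥U) ^ (Nat.card ↥U * (m * k / Nat.card ↥U) + m * k % Nat.card ↥U) := by
            rw [Nat.div_add_mod]
        _ = ((⟨u, hu⟩ : ↥U) ^ Nat.card ↥U) ^ (m * k / Nat.card ↥U) *
              (⟨u, hu⟩ : ↥U) ^ (m * k % Nat.card ↥U) := by rw [pow_add, pow_mul]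
        _ = ⟨u, hu⟩ := by rw [pow_card_eq_one', one_pow, one_mul, hk, pow_one]
    have hfin : x⁻¹ * (w : G) * x * ((w : G))⁻¹ = u := by
      have h3 := congrArg (fun v : ↥U => (v : G)) hcw
      simpa [div_eq_mul_inv, hccoe] using h3
    exact isConj_iff.mpr ⟨(w : G), by rw [← hfin]; group⟩

private lemma isConj_of_isConj_quotient_abelian {G : Type*} [Group G] [Finite G] {p : ℕ}
    [Fact p.Prime] (U : Subgroup G) [U.Normal] [IsMulCommutative U] (hU : IsPGroup p U)
    {x y : G} (hx : (orderOf x).Coprime p) (hy : (orderOf y).Coprime p)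
    (h : IsConj (x : G ⧸ U) (y : G ⧸ U)) : IsConj x y := by
  obtain ⟨c, hc⟩ := isConj_iff.mp h
  obtain ⟨g, rfl⟩ := QuotientGroup.mk_surjective c
  have hxy : ((g * x * g⁻¹ : G) : G ⧸ U) = (y : G ⧸ U) := by
    rw [← hc]
    rfl
  have hx1 : IsConj x (g * x * g⁻¹) := isConj_iff.mpr ⟨g, rfl⟩
  have hx' : (orderOf (g * x * g⁻¹)).Coprime p := by
    rwa [← SemiconjBy.orderOf_eq g (show SemiconjBy g x (g * x * g⁻¹) by
      show g * x = g * x * g⁻¹ * g; group)]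
  refine hx1.trans ?_
  set x1 := g * x * g⁻¹ with hx1def
  have humem : x1⁻¹ * y ∈ U := QuotientGroup.eq.mp hxy
  have hyu : y = x1 * (x1⁻¹ * y) := by group
  rw [hyu]
  exact conj_aux_abelian U hU humem hx' (by rwa [← hyu])

private lemma isConj_of_isConj_quotient (n : ℕ) :
    ∀ {G : Type u} [Group G] [Finite G], ∀ {p : ℕ} [Fact p.Prime],
    ∀ (U : Subgroup G) [U.Normal], IsPGroup p U → Nat.card U < n →
    ∀ {x y : G}, (orderOf x).Coprime p → (orderOf y).Coprime p →
    IsConj (x : G ⧸ U) (y : G ⧸ U) → IsConj x y := by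
  induction n with
  | zero =>
    intro G _ _ p _ U _ _ hn
    exact absurd hn (Nat.not_lt_zero _)
  | succ n ih =>
    intro G _ _ p _ U hUN hU hn x y hx hy h
    by_cases hcomm : ∀ a b : ↥U, a * b = b * a
    · haveI : IsMulCommutative U := ⟨⟨hcomm⟩⟩
      exact isConj_of_isConj_quotient_abelian U hU hx hy h
    · haveI : Nontrivial ↥U := by
        rcases subsingleton_or_nontrivial ↥U with hs | hs
        · exact absurd (fun a b => Subsingleton.elim _ _) hcomm
        · exact hs
      set Z : Subgroup G := (Subgroup.center ↥U).map U.subtype with hZ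
      have hZU : Z ≤ U := Subgroup.map_subtype_le _
      haveI hZN : Z.Normal := by
        constructor
        intro z hz g'
        obtain ⟨z0, hz0, rfl⟩ := hz
        refine ⟨⟨g' * z0 * g'⁻¹, hUN.conj_mem _ z0.2 g'⟩, ?_, rfl⟩
        rw [SetLike.mem_coe, Subgroup.mem_center_iff]
        intro v
        apply Subtype.ext
        show (v : G) * (g' * z0 * g'⁻¹) = (g' * z0 * g'⁻¹) * v
        have hv' : (g'⁻¹ * v * g' : G) ∈ U := by
          simpa using hUN.conj_mem _ v.2 g'⁻¹
        have hcz := Subgroup.mem_center_iff.mp (SetLike.mem_coe.mp hz0) (⟨g'⁻¹ * v * g', hv'⟩ : ↥U)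
        have hcoe : (g'⁻¹ * (v : G) * g') * (z0 : G) = (z0 : G) * (g'⁻¹ * v * g') :=
          congrArg (fun t : ↥U => (t : G)) hcz
        have h2 := congrArg (fun t => g' * t * g'⁻¹) hcoe
        simpa [mul_assoc] using h2
      haveI hZC : IsMulCommutative Z := by
        constructor; constructor
        intro a b
        apply Subtype.ext
        show (a : G) * b = b * a
        obtain ⟨a0, ha0, ha⟩ := a.2
        obtain ⟨b0, hb0, hb⟩ := b.2
        rw [← ha, ← hb]
        exact congrArg (fun t : ↥U => (t : G)) (Subgroup.mem_center_iff.mp (SetLike.mem_coe.mp ha0) b0).symm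
      haveI : Nontrivial ↥(Subgroup.center ↥U) := hU.center_nontrivial
      obtain ⟨z0, hz0ne⟩ := exists_ne (1 : ↥(Subgroup.center ↥U))
      have hz0mem : ((z0 : ↥U) : G) ∈ Z := ⟨(z0 : ↥U), z0.2, rfl⟩
      set π := QuotientGroup.mk' Z with hπ
      set U' : Subgroup (G ⧸ Z) := U.map π with hU'def
      haveI : U'.Normal := hUN.map π (QuotientGroup.mk'_surjective Z)
      have hU'p : IsPGroup p ↥U' := hU.map π
      have hcard : Nat.card ↥U' < Nat.card ↥U := by
        have hle : Nat.card ↥U' ≤ Nat.card ↥U :=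
          Nat.card_le_card_of_surjective _ (π.subgroupMap_surjective U)
        rcases lt_or_eq_of_le hle with hlt | heq
        · exact hlt
        · exfalso
          have hbij : Function.Bijective (π.subgroupMap U) :=
            (Nat.bijective_iff_surjective_and_card _).mpr
              ⟨π.subgroupMap_surjective U, heq.symm⟩
          have h1 : π.subgroupMap U (z0 : ↥U) = 1 := by
            apply Subtype.ext
            show π ((z0 : ↥U) : G) = 1
            exact (QuotientGroup.eq_one_iff _).mpr hz0mem
          have h2 : ((z0 : ↥U) : ↥U) = 1 := hbij.injective (h1.trans (map_one _).symm)
          exact hz0ne (OneMemClass.coe_eq_one.mp h2)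
      -- transport the conjugation to the double quotient
      set e := QuotientGroup.quotientQuotientEquivQuotient Z U hZU with he
      have hmk : ∀ a : G, e ((a : G ⧸ Z) : (G ⧸ Z) ⧸ U') = (a : G ⧸ U) := fun a =>
        QuotientGroup.quotientQuotientEquivQuotientAux_mk_mk Z U hZU a
      have hq : IsConj (((x : G ⧸ Z) : (G ⧸ Z) ⧸ U')) (((y : G ⧸ Z) : (G ⧸ Z) ⧸ U')) := by
        have h2 := e.symm.toMonoidHom.map_isConj h
        rwa [show e.symm.toMonoidHom (x : G ⧸ U) = ((x : G ⧸ Z) : (G ⧸ Z) ⧸ U') from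
            e.symm_apply_eq.mpr (hmk x).symm,
          show e.symm.toMonoidHom (y : G ⧸ U) = ((y : G ⧸ Z) : (G ⧸ Z) ⧸ U') from
            e.symm_apply_eq.mpr (hmk y).symm] at h2
      have hxZ : (orderOf (x : G ⧸ Z)).Coprime p :=
        Nat.Coprime.coprime_dvd_left (orderOf_map_dvd π x) hx
      have hyZ : (orderOf (y : G ⧸ Z)).Coprime p :=
        Nat.Coprime.coprime_dvd_left (orderOf_map_dvd π y) hy
      have hZconj : IsConj (x : G ⧸ Z) (y : G ⧸ Z) :=
        ih U' hU'p (lt_of_lt_of_le hcard (Nat.lt_succ_iff.mp hn)) hxZ hyZ hq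
      exact isConj_of_isConj_quotient_abelian Z (hU.to_le hZU) hx hy hZconj

private lemma exists_pRegular_lift {G : Type*} [Group G] [Finite G] {p : ℕ} [Fact p.Prime]
    (U : Subgroup G) [U.Normal] (xb : G ⧸ U) (hxb : (orderOf xb).Coprime p) :
    ∃ y : G, (orderOf y).Coprime p ∧ (y : G ⧸ U) = xb := by
  obtain ⟨x, rfl⟩ := QuotientGroup.mk_surjective xb
  set n := orderOf x with hn
  have hn0 : n ≠ 0 := (orderOf_pos x).ne'
  set m := orderOf (x : G ⧸ U) with hm
  have hm0 : 0 < m := orderOf_pos _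
  set a := n.factorization p with ha
  set k := m.totient * n with hk
  have hak : a ≤ k :=
    le_of_lt (lt_of_lt_of_le (Nat.factorization_lt p hn0)
      (Nat.le_mul_of_pos_left n (Nat.totient_pos.mpr hm0)))
  have hmod : p ^ k ≡ 1 [MOD m] := by
    have h1 : p ^ m.totient ≡ 1 [MOD m] := Nat.ModEq.pow_totient hxb.symm
    calc p ^ k = (p ^ m.totient) ^ n := by rw [hk, pow_mul]
      _ ≡ 1 ^ n [MOD m] := h1.pow n
      _ = 1 := one_pow n
  refine ⟨x ^ p ^ k, ?_, ?_⟩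
  · have hord : orderOf (x ^ p ^ k) = n / n.gcd (p ^ k) := orderOf_pow x
    have hgcd : n.gcd (p ^ k) = p ^ a := by
      apply Nat.dvd_antisymm
      · obtain ⟨j, hj, hje⟩ :=
          (Nat.dvd_prime_pow (Fact.out : p.Prime)).mp (Nat.gcd_dvd_right n (p ^ k))
        rw [hje]
        exact pow_dvd_pow p (((Fact.out : p.Prime).pow_dvd_iff_le_factorization hn0).mp
          (hje ▸ Nat.gcd_dvd_left n (p ^ k)))
      · exact Nat.dvd_gcd (Nat.ordProj_dvd n p) (pow_dvd_pow p hak)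
    rw [hord, hgcd]
    exact (Nat.coprime_ordCompl (Fact.out : p.Prime) hn0).symm
  · show ((x ^ p ^ k : G) : G ⧸ U) = (x : G ⧸ U)
    have h2 : ((x ^ p ^ k : G) : G ⧸ U) = ((x : G ⧸ U)) ^ p ^ k := by
      exact map_pow (QuotientGroup.mk' U) x (p ^ k)
    rw [h2]
    calc ((x : G ⧸ U)) ^ p ^ k = ((x : G ⧸ U)) ^ 1 :=
          pow_eq_pow_iff_modEq.mpr (by rw [← hm]; exact hmod)
      _ = (x : G ⧸ U) := pow_one _

private lemma isConj_orderOf_eq {G : Type*} [Group G] {a b : G} (h : IsConj a b) :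
    orderOf a = orderOf b := by
  obtain ⟨c, hc⟩ := h
  exact SemiconjBy.orderOf_eq (↑c) hc

/-- Let `G` be a finite group, `p` a prime, and `U` a normal `p`-subgroup of `G`.
Then the projection `G → G ⧸ U` induces a bijection between the set of conjugacy classes
of `p`-regular elements of `G` and the set of conjugacy classes of `p`-regular elements
of `G ⧸ U`. -/
theorem bijOn_conjClasses_pRegular_of_normal_pSubgroup
    {G : Type*} [Group G] [Finite G] (p : ℕ) [Fact p.Prime]
    (U : Subgroup G) [U.Normal] (hU : IsPGroup p U) :
    Set.BijOn (ConjClasses.map (QuotientGroup.mk' U))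
      {c : ConjClasses G | ∀ x ∈ c.carrier, Nat.Coprime (orderOf x) p}
      {c : ConjClasses (G ⧸ U) | ∀ x ∈ c.carrier, Nat.Coprime (orderOf x) p} := by
  refine ⟨?_, ?_, ?_⟩
  · -- MapsTo
    intro c hc z hz
    obtain ⟨a, rfl⟩ := c.exists_rep
    have hz' : IsConj z ((QuotientGroup.mk' U) a) :=
      ConjClasses.mk_eq_mk_iff_isConj.mp (ConjClasses.mem_carrier_iff_mk_eq.mp hz)
    have ha : (orderOf a).Coprime p := hc a (ConjClasses.mem_carrier_iff_mk_eq.mpr rfl)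
    rw [isConj_orderOf_eq hz']
    exact Nat.Coprime.coprime_dvd_left (orderOf_map_dvd (QuotientGroup.mk' U) a) ha
  · -- InjOn
    intro c1 h1 c2 h2 heq
    obtain ⟨x, rfl⟩ := c1.exists_rep
    obtain ⟨y, rfl⟩ := c2.exists_rep
    have hx := h1 x (ConjClasses.mem_carrier_iff_mk_eq.mpr rfl)
    have hy := h2 y (ConjClasses.mem_carrier_iff_mk_eq.mpr rfl)
    have hconjq : IsConj ((QuotientGroup.mk' U) x) ((QuotientGroup.mk' U) y) :=
      ConjClasses.mk_eq_mk_iff_isConj.mp heq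
    exact ConjClasses.mk_eq_mk_iff_isConj.mpr
      (isConj_of_isConj_quotient (Nat.card ↥U + 1) U hU (Nat.lt_succ_self _) hx hy hconjq)
  · -- SurjOn
    intro c hc
    obtain ⟨xb, rfl⟩ := c.exists_rep
    have hxb : (orderOf xb).Coprime p := hc xb (ConjClasses.mem_carrier_iff_mk_eq.mpr rfl)
    obtain ⟨y, hy1, hy2⟩ := exists_pRegular_lift U xb hxb
    refine ⟨ConjClasses.mk y, ?_, ?_⟩
    · intro z hz
      have hzc : IsConj z y :=
        ConjClasses.mk_eq_mk_iff_isConj.mp (ConjClasses.mem_carrier_iff_mk_eq.mp hz)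
      rw [isConj_orderOf_eq hzc]
      exact hy1
    · show ConjClasses.mk ((QuotientGroup.mk' U) y) = ConjClasses.mk xb
      rw [show (QuotientGroup.mk' U) y = xb from hy2]
end
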